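/- Let n ≥ 2(k+r), let D be a minimum k-dominating set of the Kneser graph K(n,r), and let ũ ⊆ [n] with |ũ| = r−1. Then there exists x ∈ [n] \ ũ such that ũ ∪ {x} ∉ D. -/

import Mathlib

open Finset

/-- The vertex set of the Kneser graph `K(n,r)`: the `r`-element subsets of `[n] = {1,…,n}`. -/
def KneserVerts (n r : ℕ) : Finset (Finset ℕ) := (Finset.Icc 1 n).powersetCard r

/-- Adjacency in a Kneser graph: distinct disjoint sets. -/
def KneserAdj (u v : Finset ℕ) : Prop := u ≠ v ∧ Disjoint u v

instance (u v : Finset ℕ) : Decidable (KneserAdj u v) := by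
  unfold KneserAdj; infer_instance

/-- `D` is a `k`-dominating set of `K(n,r)`: every vertex outside `D` has at least
`k` neighbours in `D`. -/
def IsKDomSet (n r k : ℕ) (D : Finset (Finset ℕ)) : Prop :=
  D ⊆ KneserVerts n r ∧
    ∀ v ∈ KneserVerts n r, v ∉ D → k ≤ (D.filter fun u => KneserAdj v u).card

/-- `D` is a `k`-tuple dominating set of `K(n,r)`: every vertex has at least `k`
vertices of `D` in its closed neighbourhood. -/
def IsKTupleDomSet (n r k : ℕ) (D : Finset (Finset ℕ)) : Prop :=
  D ⊆ KneserVerts n r ∧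
    ∀ v ∈ KneserVerts n r, k ≤ (D.filter fun u => u = v ∨ KneserAdj v u).card

/-- `D` is a `k`-tuple total dominating set of `K(n,r)`: every vertex has at least
`k` neighbours in `D`. -/
def IsKTupleTotalDomSet (n r k : ℕ) (D : Finset (Finset ℕ)) : Prop :=
  D ⊆ KneserVerts n r ∧
    ∀ v ∈ KneserVerts n r, k ≤ (D.filter fun u => KneserAdj v u).card

/-- The `k`-domination number `γ_k(K(n,r))`. -/
noncomputable def kdomNum (n r k : ℕ) : ℕ :=
  sInf {m | ∃ D, IsKDomSet n r k D ∧ D.card = m}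

/-- The `k`-tuple domination number `γ_{×k}(K(n,r))`. -/
noncomputable def ktupleDomNum (n r k : ℕ) : ℕ :=
  sInf {m | ∃ D, IsKTupleDomSet n r k D ∧ D.card = m}

/-- The `k`-tuple total domination number `γ_{×k,t}(K(n,r))`. -/
noncomputable def ktupleTotalDomNum (n r k : ℕ) : ℕ :=
  sInf {m | ∃ D, IsKTupleTotalDomSet n r k D ∧ D.card = m}

/-- `S` is a 2-packing of `K(n,r)`: any two distinct members are neither adjacent
nor have a common neighbour (i.e. are at distance at least 3). -/
def IsTwoPacking (n r : ℕ) (S : Finset (Finset ℕ)) : Prop :=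
  S ⊆ KneserVerts n r ∧
    ∀ u ∈ S, ∀ v ∈ S, u ≠ v →
      ¬ KneserAdj u v ∧ ∀ w ∈ KneserVerts n r, ¬ (KneserAdj u w ∧ KneserAdj w v)

/-- The 2-packing number `ρ₂(K(n,r))`. -/
noncomputable def twoPackingNum (n r : ℕ) : ℕ :=
  sSup {m | ∃ S, IsTwoPacking n r S ∧ S.card = m}

/-- A clique in a Kneser graph: a family of pairwise disjoint sets. -/
def IsKneserClique (D : Finset (Finset ℕ)) : Prop :=
  ∀ u ∈ D, ∀ v ∈ D, u ≠ v → Disjoint u v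

theorem stmt_1 (n r k : ℕ) (hr : 1 ≤ r) (hk : 1 ≤ k) (hn : 2 * (k + r) ≤ n)
    (D : Finset (Finset ℕ)) (hD : IsKDomSet n r k D) (hmin : D.card = kdomNum n r k)
    (u : Finset ℕ) (hu : u ⊆ Finset.Icc 1 n) (hcard : u.card = r - 1) :
    ∃ x ∈ Finset.Icc 1 n \ u, insert x u ∉ D := by
  by_contra hcon
  push_neg at hcon
  -- All extensions of `u` lie in `D`.
  have hIcard : (Finset.Icc 1 n).card = n := by
    rw [Nat.card_Icc]; omega
  have hIu : ((Finset.Icc 1 n) \ u).card = n - (r - 1) := by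
    rw [card_sdiff_of_subset hu, hIcard, hcard]
  have h1 : k + 1 ≤ ((Finset.Icc 1 n) \ u).card := by omega
  obtain ⟨X, hXsub, hXcard⟩ := Finset.exists_subset_card_eq h1
  set g : Finset ℕ := ((Finset.Icc 1 n) \ u) \ X with hg
  have hgcard : g.card = n - (r - 1) - (k + 1) := by
    rw [hg, card_sdiff_of_subset hXsub, hIu, hXcard]
  have h2 : r - 1 ≤ g.card := by omega
  obtain ⟨w₀, hw₀sub, hw₀card⟩ := Finset.exists_subset_card_eq h2
  have h3 : k ≤ (g \ w₀).card := by
    rw [card_sdiff_of_subset hw₀sub, hgcard, hw₀card]; omega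
  obtain ⟨T, hTsub, hTcard⟩ := Finset.exists_subset_card_eq h3
  -- basic facts about g
  have hgmem : ∀ a ∈ g, a ∈ Finset.Icc 1 n ∧ a ∉ u ∧ a ∉ X := by
    intro a ha
    rw [hg, mem_sdiff, mem_sdiff] at ha
    exact ⟨ha.1.1, ha.1.2, ha.2⟩
  have hXmem : ∀ x ∈ X, x ∈ Finset.Icc 1 n ∧ x ∉ u := by
    intro x hx
    have := hXsub hx
    rw [mem_sdiff] at this
    exact this
  set W : Finset (Finset ℕ) := T.image (fun t => insert t w₀) with hWdef
  set E : Finset (Finset ℕ) := X.image (fun x => insert x u) with hEdef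
  set D' : Finset (Finset ℕ) := (D \ E) ∪ W with hD'def
  have hED : E ⊆ D := by
    intro e he
    rw [hEdef, mem_image] at he
    obtain ⟨x, hx, rfl⟩ := he
    exact hcon x (hXsub hx)
  have hEcard : E.card = k + 1 := by
    rw [hEdef, card_image_of_injOn, hXcard]
    intro x hx y hy hxy
    have hxu : x ∉ u := (hXmem x hx).2
    replace hxy : insert x u = insert y u := hxy
    have : x ∈ insert y u := by rw [← hxy]; exact mem_insert_self x u
    rcases mem_insert.1 this with h | h
    · exact h
    · exact absurd h hxu
  have hWcard : W.card = k := by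
    rw [hWdef, card_image_of_injOn, hTcard]
    intro x hx y hy hxy
    have hxw : x ∉ w₀ := (mem_sdiff.1 (hTsub hx)).2
    replace hxy : insert x w₀ = insert y w₀ := hxy
    have : x ∈ insert y w₀ := by rw [← hxy]; exact mem_insert_self x w₀
    rcases mem_insert.1 this with h | h
    · exact h
    · exact absurd h hxw
  have hWg : ∀ w ∈ W, w ⊆ g := by
    intro w hw
    rw [hWdef, mem_image] at hw
    obtain ⟨t, ht, rfl⟩ := hw
    exact insert_subset (mem_sdiff.1 (hTsub ht)).1 hw₀sub
  have hWVerts : ∀ w ∈ W, w ∈ KneserVerts n r := by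
    intro w hw
    have hwg := hWg w hw
    rw [hWdef, mem_image] at hw
    obtain ⟨t, ht, rfl⟩ := hw
    rw [KneserVerts, mem_powersetCard]
    constructor
    · intro a ha
      exact (hgmem a (hwg ha)).1
    · rw [card_insert_of_notMem (mem_sdiff.1 (hTsub ht)).2, hw₀card]
      omega
  have hD'sub : D' ⊆ KneserVerts n r := by
    intro v hv
    rcases mem_union.1 hv with h | h
    · exact hD.1 (mem_sdiff.1 h).1
    · exact hWVerts v h
  have hdom : ∀ v ∈ KneserVerts n r, v ∉ D' →
      k ≤ (D'.filter fun s => KneserAdj v s).card := by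
    intro v hv hvD'
    by_cases hvE : v ∈ E
    · -- v is a removed extension: the k sets of W are its neighbours in D'
      obtain ⟨x, hxX, rfl⟩ := mem_image.1 hvE
      have hsub : W ⊆ D'.filter fun s => KneserAdj (insert x u) s := by
        intro w hw
        have hwg := hWg w hw
        refine mem_filter.2 ⟨mem_union_right _ hw, ?_, ?_⟩
        · intro heq
          have hxw : x ∈ w := by rw [← heq]; exact mem_insert_self x u
          exact (hgmem x (hwg hxw)).2.2 hxX
        · rw [Finset.disjoint_left]
          intro a ha haw
          have hag := hgmem a (hwg haw)
          rcases mem_insert.1 ha with rfl | hau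
          · exact hag.2.2 hxX
          · exact hag.2.1 hau
      calc k = W.card := hWcard.symm
        _ ≤ _ := card_le_card hsub
    · have hvD : v ∉ D := by
        intro h'
        exact hvD' (mem_union_left _ (mem_sdiff.2 ⟨h', hvE⟩))
      have hk0 := hD.2 v hv hvD
      have hvIc := (mem_powersetCard.1 hv)
      by_cases hdisj : Disjoint v u
      · -- v is disjoint from u: it has many fresh extension-neighbours in D'
        set S : Finset ℕ := (((Finset.Icc 1 n) \ u) \ X) \ v with hS
        have hScard : k ≤ S.card := by
          have h4 : g.card - v.card ≤ (g \ v).card := Finset.le_card_sdiff v g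
          have h5 : (g \ v).card = S.card := rfl
          rw [hvIc.2] at h4
          omega
        have hSmem : ∀ t ∈ S, t ∈ Finset.Icc 1 n ∧ t ∉ u ∧ t ∉ X ∧ t ∉ v := by
          intro t ht
          rw [hS, mem_sdiff] at ht
          obtain ⟨htg, htv⟩ := ht
          obtain ⟨h6, h7, h8⟩ := hgmem t htg
          exact ⟨h6, h7, h8, htv⟩
        have hsub : S.image (fun t => insert t u) ⊆
            D'.filter fun s => KneserAdj v s := by
          intro e he
          rw [mem_image] at he
          obtain ⟨t, ht, rfl⟩ := he
          obtain ⟨h6, h7, h8, h9⟩ := hSmem t ht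
          have heD : insert t u ∈ D := hcon t (mem_sdiff.2 ⟨h6, h7⟩)
          have heE : insert t u ∉ E := by
            intro hE'
            rw [hEdef, mem_image] at hE'
            obtain ⟨x, hx, hxe⟩ := hE'
            have : t ∈ insert x u := by rw [hxe]; exact mem_insert_self t u
            rcases mem_insert.1 this with rfl | h
            · exact h8 hx
            · exact h7 h
          refine mem_filter.2 ⟨mem_union_left _ (mem_sdiff.2 ⟨heD, heE⟩), ?_, ?_⟩
          · intro heq
            have : t ∈ v := by rw [heq]; exact mem_insert_self t u
            exact h9 this
          · rw [Finset.disjoint_left]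
            intro a ha hae
            rcases mem_insert.1 hae with rfl | hau
            · exact h9 ha
            · exact (Finset.disjoint_left.1 hdisj ha) hau
        have hinj : (S.image (fun t => insert t u)).card = S.card := by
          apply card_image_of_injOn
          intro x hx y hy hxy
          have hxu : x ∉ u := (hSmem x hx).2.1
          replace hxy : insert x u = insert y u := hxy
          have : x ∈ insert y u := by rw [← hxy]; exact mem_insert_self x u
          rcases mem_insert.1 this with h | h
          · exact h
          · exact absurd h hxu
        calc k ≤ S.card := hScard
          _ = _ := hinj.symm
          _ ≤ _ := card_le_card hsub
      · -- v meets u: removed extensions were never neighbours of v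
        have hsub : (D.filter fun s => KneserAdj v s) ⊆
            D'.filter fun s => KneserAdj v s := by
          intro s hs
          rw [mem_filter] at hs
          refine mem_filter.2 ⟨mem_union_left _ (mem_sdiff.2 ⟨hs.1, ?_⟩), hs.2⟩
          intro hsE
          rw [hEdef, mem_image] at hsE
          obtain ⟨x, hx, rfl⟩ := hsE
          exact hdisj (Finset.disjoint_of_subset_right (subset_insert x u) hs.2.2)
        exact le_trans hk0 (card_le_card hsub)
  -- D' is a strictly smaller k-dominating set: contradiction with minimality
  have hEleD : E.card ≤ D.card := card_le_card hED
  have hD'card : D'.card ≤ D.card - 1 := by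
    have h4 : D'.card ≤ (D \ E).card + W.card := card_union_le _ _
    rw [card_sdiff_of_subset hED, hEcard, hWcard] at h4
    omega
  have hle : kdomNum n r k ≤ D'.card := by
    apply Nat.sInf_le
    exact ⟨D', ⟨hD'sub, hdom⟩, rfl⟩
  omega
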